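/- Let R be a commutative ring and let (Δ, (R_δ)_{δ∈Δ}) be a universal grading of R. Then the abelian group Δ is generated by the set {δ ∈ Δ : R_δ ≠ 0}. -/

import Mathlib

/-- A grading of a commutative ring `R` by a (multiplicatively written) abelian group `Δ`:
a `Δ`-indexed internal direct sum decomposition of `R` into additive subgroups such that
`R_γ · R_δ ⊆ R_{γδ}`. -/
structure Grading (R : Type u) [CommRing R] (Δ : Type v) [CommGroup Δ] where
  comp : Δ → AddSubgroup R
  mul_mem : ∀ ⦃γ δ : Δ⦄ ⦃x y : R⦄, x ∈ comp γ → y ∈ comp δ → x * y ∈ comp (γ * δ)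
  isInternal : letI := Classical.decEq Δ; DirectSum.IsInternal comp

/-- A grading is universal if every grading of `R` is obtained from it by pushforward
(`S_ε = Σ_{δ ∈ f⁻¹(ε)} R_δ`) along a unique group homomorphism. -/
def Grading.IsUniversal {R : Type u} [CommRing R] {Δ : Type v} [CommGroup Δ]
    (g : Grading R Δ) : Prop :=
  ∀ (E : Type v) (_ : CommGroup E) (s : Grading R E),
    ∃! f : Δ →* E, ∀ ε : E, s.comp ε = ⨆ δ ∈ f ⁻¹' {ε}, g.comp δ

/-- `IsInternal` for a family of additive subgroups is the same as for the associated
family of `ℤ`-submodules. -/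
lemma isInternal_toIntSubmodule {M : Type*} [AddCommGroup M] {ι : Type*} [DecidableEq ι]
    (A : ι → AddSubgroup M) :
    DirectSum.IsInternal A ↔ DirectSum.IsInternal (fun i => (A i).toIntSubmodule) := Iff.rfl

/-- Restricting an internal decomposition to a set of indices containing all indices with
nontrivial component is again internal. -/
lemma isInternal_restrict {M : Type*} [AddCommGroup M] {ι : Type*} [DecidableEq ι]
    {A : ι → AddSubgroup M} (h : DirectSum.IsInternal A) (s : Set ι)
    (hs : ∀ i ∉ s, A i = ⊥) :
    letI := Classical.decEq s; DirectSum.IsInternal (fun i : s => A i) := by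
  letI := Classical.decEq s
  rw [isInternal_toIntSubmodule] at h ⊢
  rw [DirectSum.isInternal_submodule_iff_iSupIndep_and_iSup_eq_top] at h ⊢
  obtain ⟨hind, htop⟩ := h
  refine ⟨hind.comp Subtype.val_injective, le_antisymm le_top ?_⟩
  rw [← htop]
  refine iSup_le fun i => ?_
  by_cases hi : i ∈ s
  · exact le_iSup (fun j : s => (A (j : ι)).toIntSubmodule) ⟨i, hi⟩
  · rw [hs i hi]
    simp

/-- If `(Δ, (R_δ))` is a universal grading of a commutative ring `R`, then
`Δ` is generated by `{δ : R_δ ≠ 0}`. -/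
theorem universal_grading_generated_by_support
    {R : Type u} [CommRing R] {Δ : Type v} [CommGroup Δ]
    (g : Grading R Δ) (hg : g.IsUniversal) :
    Subgroup.closure {δ : Δ | g.comp δ ≠ ⊥} = ⊤ := by
  classical
  set S : Set Δ := {δ : Δ | g.comp δ ≠ ⊥} with hS
  set Γ : Subgroup Δ := Subgroup.closure S with hΓ
  have hbot : ∀ δ : Δ, δ ∉ Γ → g.comp δ = ⊥ := by
    intro δ hδ
    by_contra hne
    exact hδ (Subgroup.subset_closure hne)
  -- the restricted grading on Γ
  have hint : DirectSum.IsInternal (fun γ : Γ => g.comp (γ : Δ)) := by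
    have := isInternal_restrict (g.isInternal) (Γ : Set Δ) hbot
    convert this using 2
    all_goals rfl
  let g' : Grading R Γ :=
    { comp := fun γ => g.comp (γ : Δ)
      mul_mem := fun γ δ x y hx hy => g.mul_mem hx hy
      isInternal := by convert hint using 2 }
  obtain ⟨f, hf, -⟩ := hg Γ inferInstance g'
  obtain ⟨f₀, -, huniq₀⟩ := hg Δ inferInstance g
  -- the identity satisfies the pushforward condition for `g` itself
  have hid : (MonoidHom.id Δ) = f₀ := by
    refine huniq₀ _ fun ε => ?_
    simp
  -- so does `Γ.subtype.comp f`
  have hcomp : Γ.subtype.comp f = f₀ := by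
    refine huniq₀ _ fun ε => ?_
    by_cases hε : ε ∈ Γ
    · have hpre : (Γ.subtype.comp f) ⁻¹' {ε} = f ⁻¹' {⟨ε, hε⟩} := by
        ext δ
        simp only [Set.mem_preimage, Set.mem_singleton_iff, MonoidHom.comp_apply,
          Subgroup.coe_subtype]
        exact ⟨fun h => Subtype.ext h, fun h => by rw [h]⟩
      rw [hpre, ← hf ⟨ε, hε⟩]
    · have hpre : (Γ.subtype.comp f) ⁻¹' {ε} = ∅ := by
        ext δ
        simp only [Set.mem_preimage, Set.mem_singleton_iff, MonoidHom.comp_apply,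
          Subgroup.coe_subtype, Set.mem_empty_iff_false, iff_false]
        intro h
        exact hε (h ▸ (f δ).2)
      rw [hpre, hbot ε hε]
      simp
  have hsurj : ∀ δ : Δ, δ ∈ Γ := by
    intro δ
    have : (Γ.subtype.comp f) δ = (MonoidHom.id Δ) δ := by rw [hcomp, hid]
    simp only [MonoidHom.comp_apply, Subgroup.coe_subtype, MonoidHom.id_apply] at this
    exact this ▸ (f δ).2
  exact Subgroup.eq_top_iff' Γ |>.mpr hsurj
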